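/- Let V be a finite-dimensional vector space with two commuting linear operators x, y satisfying x² = y² = xy = yx = 0, and suppose xV ∩ yV = 0. Then dim ker(x+y)/im(x+y) = dim of the homology of the operator induced by x on ker(y)/im(y). More precisely, letting W = ker(y)/im(y) with the operator x̄ induced by x (which satisfies x̄² = 0), one has dim(ker(x+y)/im(x+y)) = dim(ker x̄ / im x̄). -/
import Mathlib

set_option synthInstance.maxHeartbeats 1000000
set_option maxHeartbeats 1000000


/-- The homology `ker f / im f` of an operator `f`. -/
abbrev homol {W : Type*} [AddCommGroup W] [Module ℂ W] (f : W →ₗ[ℂ] W) :=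
  ↥(LinearMap.ker f) ⧸ ((LinearMap.range f).comap (LinearMap.ker f).subtype)

lemma homol_rank {W : Type*} [AddCommGroup W] [Module ℂ W] [FiniteDimensional ℂ W]
    (f : W →ₗ[ℂ] W) (h : LinearMap.range f ≤ LinearMap.ker f) :
    Module.finrank ℂ (homol f) + Module.finrank ℂ (LinearMap.range f)
      = Module.finrank ℂ (LinearMap.ker f) := by
  have h1 := Submodule.finrank_quotient_add_finrank
    ((LinearMap.range f).comap (LinearMap.ker f).subtype)
  rw [(Submodule.comapSubtypeEquivOfLe h).finrank_eq] at h1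
  exact h1

/-- let `x, y` be commuting operators on a finite-dimensional space
with `x² = y² = xy = yx = 0` and `xV ∩ yV = 0`.  Then
`dim ker(x+y)/im(x+y) = dim ker x̄/im x̄`, where `x̄` is the operator induced by
`x` on `W = ker(y)/im(y)`. -/
theorem stmt11 {V : Type*} [AddCommGroup V] [Module ℂ V] [FiniteDimensional ℂ V]
    (x y : Module.End ℂ V) (hx : x * x = 0) (hy : y * y = 0)
    (hxy : x * y = 0) (hyx : y * x = 0)
    (hint : LinearMap.range x ⊓ LinearMap.range y = ⊥)
    (hker : ∀ w ∈ LinearMap.ker y, x w ∈ LinearMap.ker y)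
    (xbar : Module.End ℂ
      (↥(LinearMap.ker y) ⧸ ((LinearMap.range y).comap (LinearMap.ker y).subtype)))
    (hbar : ∀ w : LinearMap.ker y,
      xbar (Submodule.Quotient.mk w) =
        Submodule.Quotient.mk ⟨x w.1, hker w.1 w.2⟩) :
    Module.finrank ℂ (homol (x + y)) = Module.finrank ℂ (homol xbar) := by
  classical
  set K : Submodule ℂ V := LinearMap.ker x ⊓ LinearMap.ker y with hKdef
  -- kernel of x + y is K
  have hkerxy : LinearMap.ker (x + y) = K := by
    ext v
    simp only [LinearMap.mem_ker, LinearMap.add_apply, hKdef, Submodule.mem_inf]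
    constructor
    · intro h
      have hxv : x v ∈ LinearMap.range x ⊓ LinearMap.range y := by
        refine ⟨⟨v, rfl⟩, ?_⟩
        have hx' : x v = -(y v) := eq_neg_of_add_eq_zero_left h
        rw [hx']
        exact neg_mem ⟨v, rfl⟩
      rw [hint, Submodule.mem_bot] at hxv
      constructor
      · exact hxv
      · rw [hxv, zero_add] at h; exact h
    · rintro ⟨h1, h2⟩; rw [h1, h2, add_zero]
  -- (x+y)^2 = 0
  have hsq : (x + y) * (x + y) = 0 := by
    rw [add_mul, mul_add, mul_add, hx, hy, hxy, hyx]
    simp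
  have hle : LinearMap.range (x + y) ≤ LinearMap.ker (x + y) := by
    rintro v ⟨u, rfl⟩
    have : ((x + y) * (x + y)) u = 0 := by rw [hsq]; rfl
    exact this
  -- range xbar ≤ ker xbar
  have hlebar : LinearMap.range xbar ≤ LinearMap.ker xbar := by
    rintro q ⟨p, rfl⟩
    obtain ⟨w, rfl⟩ := Submodule.Quotient.mk_surjective _ p
    rw [LinearMap.mem_ker, hbar w, hbar ⟨x w.1, hker w.1 w.2⟩]
    have hz : x (x w.1) = 0 := by
      have : (x * x) w.1 = 0 := by rw [hx]; rfl
      exact this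
    have h0 : (⟨x (x w.1), hker _ (hker w.1 w.2)⟩ : LinearMap.ker y) = 0 :=
      Subtype.ext hz
    rw [h0, Submodule.Quotient.mk_zero]
  have hTK : (LinearMap.range y).comap (LinearMap.ker y).subtype ≤
      K.comap (LinearMap.ker y).subtype := by
    rintro ⟨w, hw⟩ hmem
    obtain ⟨u, hu⟩ := hmem
    simp only [Submodule.mem_comap, Submodule.coe_subtype, hKdef,
      Submodule.mem_inf] at *
    refine ⟨?_, hw⟩
    show x w = 0
    rw [← hu]
    have : (x * y) u = 0 := by rw [hxy]; rfl
    exact this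
  -- the map g : K'' → W with range = ker xbar, ker ≃ T
  set g : ↥(K.comap (LinearMap.ker y).subtype) →ₗ[ℂ]
      (↥(LinearMap.ker y) ⧸ (LinearMap.range y).comap (LinearMap.ker y).subtype) :=
    ((LinearMap.range y).comap (LinearMap.ker y).subtype).mkQ.comp
      (K.comap (LinearMap.ker y).subtype).subtype with hgdef
  have hkerg : LinearMap.ker g =
      ((LinearMap.range y).comap (LinearMap.ker y).subtype).comap
        (K.comap (LinearMap.ker y).subtype).subtype := by
    ext v
    simp [hgdef, LinearMap.mem_ker, Submodule.Quotient.mk_eq_zero]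
  have hrangeg : LinearMap.range g = LinearMap.ker xbar := by
    ext q
    constructor
    · rintro ⟨⟨w, hw⟩, rfl⟩
      simp only [Submodule.mem_comap, hKdef, Submodule.mem_inf] at hw
      show xbar (Submodule.Quotient.mk w) = 0
      rw [hbar w]
      have h0 : (⟨x w.1, hker w.1 w.2⟩ : LinearMap.ker y) = 0 := Subtype.ext hw.1
      rw [h0, Submodule.Quotient.mk_zero]
    · intro hq
      obtain ⟨w, rfl⟩ := Submodule.Quotient.mk_surjective _ q
      rw [LinearMap.mem_ker, hbar w, Submodule.Quotient.mk_eq_zero] at hq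
      have hxw : x w.1 ∈ LinearMap.range x ⊓ LinearMap.range y := ⟨⟨w.1, rfl⟩, hq⟩
      rw [hint, Submodule.mem_bot] at hxw
      refine ⟨⟨w, ?_⟩, rfl⟩
      simp only [Submodule.mem_comap, hKdef, Submodule.mem_inf]
      exact ⟨hxw, w.2⟩
  -- dimension bookkeeping
  have e1 := homol_rank (x + y) hle
  have e2 := homol_rank xbar hlebar
  have e3 := LinearMap.finrank_range_add_finrank_ker (x + y)
  have e4 := LinearMap.finrank_range_add_finrank_ker xbar
  have e5 := LinearMap.finrank_range_add_finrank_ker g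
  have e6 := LinearMap.finrank_range_add_finrank_ker y
  have e7 := Submodule.finrank_quotient_add_finrank
    ((LinearMap.range y).comap (LinearMap.ker y).subtype)
  -- identifications
  have hKle : K ≤ LinearMap.ker y := inf_le_right
  have hK''K : Module.finrank ℂ (K.comap (LinearMap.ker y).subtype)
      = Module.finrank ℂ K :=
    (Submodule.comapSubtypeEquivOfLe hKle).finrank_eq
  have hTy : Module.finrank ℂ ((LinearMap.range y).comap (LinearMap.ker y).subtype)
      = Module.finrank ℂ (LinearMap.range y) :=
    (Submodule.comapSubtypeEquivOfLe (by
      rintro v ⟨u, rfl⟩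
      have : (y * y) u = 0 := by rw [hy]; rfl
      exact this : LinearMap.range y ≤ LinearMap.ker y)).finrank_eq
  have hkergT : Module.finrank ℂ (LinearMap.ker g) =
      Module.finrank ℂ ((LinearMap.range y).comap (LinearMap.ker y).subtype) :=
    ((LinearEquiv.ofEq _ _ hkerg).trans (Submodule.comapSubtypeEquivOfLe hTK)).finrank_eq
  have hk1 : Module.finrank ℂ (LinearMap.ker (x + y)) = Module.finrank ℂ K :=
    (LinearEquiv.ofEq _ _ hkerxy).finrank_eq
  have hk2 : Module.finrank ℂ (LinearMap.range g)
      = Module.finrank ℂ (LinearMap.ker xbar) :=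
    (LinearEquiv.ofEq _ _ hrangeg).finrank_eq
  rw [hk1] at e1 e3
  rw [hk2] at e5
  rw [hkergT, hK''K, hTy] at e5
  rw [hTy] at e7
  omega
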